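/- Let σ, τ be polynomials with deg σ ≤ 2, deg τ ≤ 1, and η ∈ ℂ. Assume kσ''/2 + τ' ≠ 0 for all k ∈ ℕ₀ (including k = 0). Then the space of polynomial solutions of σ(z)P'' + τ(z)P' + ηP = 0 has dimension at most 1. -/

import Mathlib

open Polynomial

lemma sol_eigen (σ τ : Polynomial ℂ) (hσ : σ.natDegree ≤ 2) (hτ : τ.natDegree ≤ 1) (η : ℂ)
    (S : Polynomial ℂ)
    (hS : σ * derivative (derivative S) + τ * derivative S + Polynomial.C η * S = 0) :
    ((S.natDegree : ℂ) * ((S.natDegree : ℂ) - 1) * σ.coeff 2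
      + (S.natDegree : ℂ) * τ.coeff 1 + η) * S.coeff S.natDegree = 0 := by
  obtain ⟨n, n_eq⟩ : ∃ n, S.natDegree = n := ⟨_, rfl⟩
  rw [n_eq]
  have hc := congrArg (fun p => Polynomial.coeff p n) hS
  simp only [coeff_add, coeff_zero] at hc
  rcases n with _ | _ | m
  · -- n = 0
    obtain ⟨c, rfl⟩ := Polynomial.natDegree_eq_zero.mp n_eq
    simp only [derivative_C, derivative_zero, mul_zero, zero_add, coeff_C_mul] at hc
    push_cast
    ring_nf
    simpa using hc
  · -- n = 1
    have h1 : natDegree (derivative S) = 0 := by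
      have := Polynomial.natDegree_derivative_le S
      omega
    obtain ⟨k, hk⟩ := Polynomial.natDegree_eq_zero.mp h1
    have hσ0 : (σ * derivative (derivative S)).coeff 1 = 0 := by
      rw [← hk]; simp
    have hτ1 : (τ * derivative S).coeff 1 =
        τ.coeff 1 * (derivative S).coeff 0 := by
      have := Polynomial.coeff_mul_add_eq_of_natDegree_le (f := τ) (g := derivative S)
        (df := 1) (dg := 0) hτ (le_of_eq h1)
      simpa using this
    rw [hσ0, hτ1, coeff_C_mul, coeff_derivative] at hc
    push_cast
    push_cast at hc
    linear_combination hc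
  · -- n = m + 2
    have hd1 : (derivative S).natDegree ≤ m + 1 := by
      have := Polynomial.natDegree_derivative_le S; omega
    have hd2 : (derivative (derivative S)).natDegree ≤ m := by
      have := Polynomial.natDegree_derivative_le (derivative S); omega
    have hA : (σ * derivative (derivative S)).coeff (m + 2) =
        σ.coeff 2 * (derivative (derivative S)).coeff m := by
      have := Polynomial.coeff_mul_add_eq_of_natDegree_le (f := σ)
        (g := derivative (derivative S)) (df := 2) (dg := m) hσ hd2
      rw [show m + 2 = 2 + m by ring]
      exact this
    have hB : (τ * derivative S).coeff (m + 2) =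
        τ.coeff 1 * (derivative S).coeff (m + 1) := by
      have := Polynomial.coeff_mul_add_eq_of_natDegree_le (f := τ) (g := derivative S)
        (df := 1) (dg := m + 1) hτ hd1
      rw [show m + 2 = 1 + (m + 1) by ring]
      exact this
    rw [hA, hB, coeff_C_mul, coeff_derivative, coeff_derivative] at hc
    push_cast
    push_cast at hc
    linear_combination hc

lemma eig_inj (σ τ : Polynomial ℂ)
    (hnd : ∀ k : ℕ, (k : ℂ) * (derivative (derivative σ)).coeff 0 / 2
      + (derivative τ).coeff 0 ≠ 0) (η : ℂ) (n m : ℕ)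
    (hn : (n : ℂ) * ((n : ℂ) - 1) * σ.coeff 2 + (n : ℂ) * τ.coeff 1 + η = 0)
    (hm : (m : ℂ) * ((m : ℂ) - 1) * σ.coeff 2 + (m : ℂ) * τ.coeff 1 + η = 0) :
    n = m := by
  by_contra hne
  have hkey : ((n : ℂ) - m) * (((n : ℂ) + m - 1) * σ.coeff 2 + τ.coeff 1) = 0 := by
    linear_combination hn - hm
  have hnm : (n : ℂ) - m ≠ 0 := by
    rw [sub_ne_zero]
    exact fun h => hne (Nat.cast_injective h)
  have h2 : ((n : ℂ) + m - 1) * σ.coeff 2 + τ.coeff 1 = 0 :=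
    (mul_eq_zero.mp hkey).resolve_left hnm
  have h1 : 1 ≤ n + m := by omega
  have := hnd (n + m - 1)
  apply this
  have hcast : ((n + m - 1 : ℕ) : ℂ) = (n : ℂ) + m - 1 := by
    push_cast [Nat.cast_sub h1]; ring
  have hσ'' : (derivative (derivative σ)).coeff 0 = σ.coeff 2 * 2 := by
    norm_num [coeff_derivative]
  have hτ' : (derivative τ).coeff 0 = τ.coeff 1 := by
    norm_num [coeff_derivative]
  rw [hcast, hσ'', hτ']
  linear_combination h2

theorem polynomial_solutions_dimension_le_one (σ τ : Polynomial ℂ)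
    (hσ : σ.natDegree ≤ 2) (hτ : τ.natDegree ≤ 1) (η : ℂ)
    (hnd : ∀ k : ℕ, (k : ℂ) * (derivative (derivative σ)).coeff 0 / 2
      + (derivative τ).coeff 0 ≠ 0)
    (P Q : Polynomial ℂ)
    (hP : σ * derivative (derivative P) + τ * derivative P + Polynomial.C η * P = 0)
    (hQ : σ * derivative (derivative Q) + τ * derivative Q + Polynomial.C η * Q = 0) :
    ∃ c d : ℂ, ¬(c = 0 ∧ d = 0) ∧ c • P + d • Q = 0 := by
  by_cases hP0 : P = 0
  · exact ⟨1, 0, by simp, by simp [hP0]⟩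
  by_cases hQ0 : Q = 0
  · exact ⟨0, 1, by simp, by simp [hQ0]⟩
  have eigen : ∀ S : Polynomial ℂ, S ≠ 0 →
      σ * derivative (derivative S) + τ * derivative S + Polynomial.C η * S = 0 →
      (S.natDegree : ℂ) * ((S.natDegree : ℂ) - 1) * σ.coeff 2
        + (S.natDegree : ℂ) * τ.coeff 1 + η = 0 := by
    intro S hS0 hS
    have := sol_eigen σ τ hσ hτ η S hS
    rcases mul_eq_zero.mp this with h | h
    · exact h
    · exact absurd h (Polynomial.leadingCoeff_ne_zero.mpr hS0)
  have hnP := eigen P hP0 hP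
  have hnQ := eigen Q hQ0 hQ
  have hdeg : P.natDegree = Q.natDegree := eig_inj σ τ hnd η _ _ hnP hnQ
  set c := Q.leadingCoeff with hc
  set d := -P.leadingCoeff with hd
  have hcne : c ≠ 0 := Polynomial.leadingCoeff_ne_zero.mpr hQ0
  refine ⟨c, d, fun h => hcne h.1, ?_⟩
  set R := c • P + d • Q with hRdef
  have hR : σ * derivative (derivative R) + τ * derivative R + Polynomial.C η * R = 0 := by
    rw [hRdef]
    simp only [smul_eq_C_mul, derivative_add, Polynomial.derivative_C_mul]
    linear_combination (Polynomial.C c) * hP + (Polynomial.C d) * hQ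
  by_contra hR0
  have hRcoeff : R.coeff P.natDegree = 0 := by
    rw [hRdef]
    simp only [Polynomial.coeff_add, Polynomial.coeff_smul, smul_eq_mul]
    rw [hdeg]
    rw [hc, hd, ← hdeg]
    simp only [Polynomial.leadingCoeff]
    rw [hdeg]
    ring
  have hRdegle : R.natDegree ≤ P.natDegree := by
    apply le_trans (Polynomial.natDegree_add_le _ _)
    simp only [max_le_iff]
    constructor
    · exact le_trans (Polynomial.natDegree_smul_le _ _) le_rfl
    · exact le_trans (Polynomial.natDegree_smul_le _ _) (le_of_eq hdeg.symm)
  have hReig := eigen R hR0 hR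
  have hnd' : R.natDegree = P.natDegree := eig_inj σ τ hnd η _ _ hReig hnP
  have : R.leadingCoeff = 0 := by
    rw [Polynomial.leadingCoeff, hnd']; exact hRcoeff
  exact Polynomial.leadingCoeff_ne_zero.mpr hR0 this
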